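/- Let E be a Banach lattice of dimension at least n and let x_1, …, x_n be nonzero positive pairwise disjoint vectors of E. Then there exist positive continuous linear functionals φ_1, …, φ_n on E such that φ_i(x_j) = δ_{ij} for all i, j = 1, …, n. -/

import Mathlib

section Aux

variable {E : Type*} [NormedAddCommGroup E] [Lattice E] [HasSolidNorm E] [IsOrderedAddMonoid E]
    [NormedSpace ℝ E] [PosSMulStrictMono ℝ E]

private lemma aux_inf_add {a b c : E} (ha : 0 ≤ a) (hb : 0 ≤ b) (hc : 0 ≤ c)
    (hab : a ⊓ b = 0) (hac : a ⊓ c = 0) : a ⊓ (b + c) = 0 := by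
  have h1 : a ⊓ (b + c) - b ≤ a ⊓ c := by
    refine le_inf ((sub_le_self _ hb).trans inf_le_left) ?_
    rw [sub_le_iff_le_add, add_comm c b]
    exact inf_le_right
  rw [hac] at h1
  have h2 : a ⊓ (b + c) ≤ b := sub_nonpos.mp h1
  have h3 : a ⊓ (b + c) ≤ a ⊓ b := le_inf inf_le_left h2
  rw [hab] at h3
  exact le_antisymm h3 (le_inf ha (add_nonneg hb hc))

private lemma aux_posPart_sub {a b : E} (ha : 0 ≤ a) (hb : 0 ≤ b) (hab : a ⊓ b = 0) :
    (a - b)⁺ = a := by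
  have hsup : a ⊔ b = a + b := by
    have h := inf_add_sup a b
    rw [hab, zero_add] at h
    exact h
  calc (a - b)⁺ = (a - b) ⊔ (b - b) := by rw [posPart_def, sub_self]
    _ = (a ⊔ b) - b := (sup_sub a b b).symm
    _ = a := by rw [hsup]; abel

private lemma aux_smul_posPart {c : ℝ} (hc : 0 ≤ c) (a : E) : (c • a)⁺ = c • a⁺ := by
  rcases hc.eq_or_lt with rfl | hc
  · simp
  · have h : c • (a ⊔ 0) = c • a ⊔ c • 0 :=
      (OrderIso.smulRight (α := ℝ) (β := E) hc).map_sup a 0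
    rw [smul_zero] at h
    rw [posPart_def, posPart_def, h]

private lemma aux_smul_inf_zero {a b : E} (ha : 0 ≤ a) (hb : 0 ≤ b) (hab : a ⊓ b = 0)
    {c t : ℝ} (hc : 0 ≤ c) (ht : 0 ≤ t) : (c • a) ⊓ (t • b) = 0 := by
  set M : ℝ := max c t with hM
  have hM0 : 0 ≤ M := le_trans hc (le_max_left _ _)
  rcases hM0.eq_or_lt with hM' | hM'
  · have hc0 : c = 0 := le_antisymm (hM' ▸ le_max_left c t) hc
    have ht0 : t = 0 := le_antisymm (hM' ▸ le_max_right c t) ht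
    simp [hc0, ht0]
  · have h1 : c • a ≤ M • a := by
      rw [← sub_nonneg, ← sub_smul]
      exact smul_nonneg (by rw [sub_nonneg]; exact le_max_left c t) ha
    have h2 : t • b ≤ M • b := by
      rw [← sub_nonneg, ← sub_smul]
      exact smul_nonneg (by rw [sub_nonneg]; exact le_max_right c t) hb
    have hinf : (M • a) ⊓ (M • b) = M • (a ⊓ b) :=
      ((OrderIso.smulRight (α := ℝ) (β := E) hM').map_inf a b).symm
    refine le_antisymm ?_ (le_inf (smul_nonneg hc ha) (smul_nonneg ht hb))
    calc (c • a) ⊓ (t • b) ≤ (M • a) ⊓ (M • b) := inf_le_inf h1 h2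
      _ = M • (a ⊓ b) := hinf
      _ = 0 := by rw [hab, smul_zero]

private lemma aux_norm_posPart_le (a : E) : ‖a⁺‖ ≤ ‖a‖ := by
  refine norm_le_norm_of_abs_le_abs ?_
  rw [abs_of_nonneg (posPart_nonneg a)]
  exact sup_le (le_abs_self a) (abs_nonneg a)

/-- Key construction: a positive continuous functional norming `a` and nonpositive below `y`. -/
private lemma exists_pos_functional {a y : E} (ha : 0 ≤ a) (hy : 0 ≤ y) (hay : a ⊓ y = 0) :
    ∃ g : E →L[ℝ] ℝ, (∀ v, 0 ≤ v → 0 ≤ g v) ∧ g a = ‖a‖ ∧ ∀ v, v ≤ y → g v ≤ 0 := by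
  classical
  set N : E → ℝ := fun v => sInf ((fun t : ℝ => ‖(v - t • y)⁺‖) '' Set.Ici 0) with hN
  have hne : ∀ v : E, ((fun t : ℝ => ‖(v - t • y)⁺‖) '' Set.Ici 0).Nonempty :=
    fun v => ⟨‖(v - (0:ℝ) • y)⁺‖, ⟨0, Set.self_mem_Ici, rfl⟩⟩
  have hbd : ∀ v : E, BddBelow ((fun t : ℝ => ‖(v - t • y)⁺‖) '' Set.Ici 0) := by
    intro v
    refine ⟨0, ?_⟩
    rintro r ⟨t, -, rfl⟩
    exact norm_nonneg _
  have hNle : ∀ v (t : ℝ), 0 ≤ t → N v ≤ ‖(v - t • y)⁺‖ :=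
    fun v t ht => csInf_le (hbd v) ⟨t, ht, rfl⟩
  have hleN : ∀ (v : E) (r : ℝ), (∀ t : ℝ, 0 ≤ t → r ≤ ‖(v - t • y)⁺‖) → r ≤ N v := by
    intro v r h
    refine le_csInf (hne v) ?_
    rintro b ⟨t, ht, rfl⟩
    exact h t ht
  have hN0 : ∀ v, 0 ≤ N v := fun v => hleN v 0 (fun t _ => norm_nonneg _)
  -- homogeneity
  have N_hom : ∀ c : ℝ, 0 < c → ∀ v, N (c • v) = c * N v := by
    intro c hc v
    have key : ∀ t : ℝ, 0 ≤ t → ‖(c • v - (c * t) • y)⁺‖ = c * ‖(v - t • y)⁺‖ := by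
      intro t ht
      have h1 : c • v - (c * t) • y = c • (v - t • y) := by
        rw [smul_sub, mul_smul]
      rw [h1, aux_smul_posPart hc.le, norm_smul, Real.norm_of_nonneg hc.le]
    refine le_antisymm ?_ ?_
    · have h : N (c • v) / c ≤ N v := by
        refine hleN v _ ?_
        intro t ht
        rw [div_le_iff₀ hc]
        calc N (c • v) ≤ ‖(c • v - (c * t) • y)⁺‖ := hNle _ _ (mul_nonneg hc.le ht)
          _ = c * ‖(v - t • y)⁺‖ := key t ht
          _ = ‖(v - t • y)⁺‖ * c := mul_comm _ _
      calc N (c • v) = c * (N (c • v) / c) := by field_simp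
        _ ≤ c * N v := mul_le_mul_of_nonneg_left h hc.le
    · refine hleN (c • v) _ ?_
      intro t ht
      have h1 : c • v - t • y = c • (v - (t / c) • y) := by
        rw [smul_sub, ← mul_smul, mul_div_cancel₀ _ hc.ne']
      rw [h1, aux_smul_posPart hc.le, norm_smul, Real.norm_of_nonneg hc.le]
      exact mul_le_mul_of_nonneg_left (hNle v (t / c) (div_nonneg ht hc.le)) hc.le
  -- subadditivity
  have N_add : ∀ v w, N (v + w) ≤ N v + N w := by
    intro v w
    have h : N (v + w) - N w ≤ N v := by
      refine hleN v _ ?_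
      intro s hs
      rw [sub_le_iff_le_add]
      have h2 : N (v + w) - ‖(v - s • y)⁺‖ ≤ N w := by
        refine hleN w _ ?_
        intro t ht
        rw [sub_le_iff_le_add]
        have hAB : (v + w) - (s + t) • y = (v - s • y) + (w - t • y) := by
          rw [add_smul]; abel
        have hle1 : ((v - s • y) + (w - t • y))⁺ ≤ (v - s • y)⁺ + (w - t • y)⁺ := by
          rw [posPart_def]
          exact sup_le (add_le_add (le_posPart _) (le_posPart _))
            (add_nonneg (posPart_nonneg _) (posPart_nonneg _))
        calc N (v + w) ≤ ‖((v + w) - (s + t) • y)⁺‖ := hNle _ _ (add_nonneg hs ht)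
          _ ≤ ‖(v - s • y)⁺ + (w - t • y)⁺‖ := by
              refine norm_le_norm_of_abs_le_abs ?_
              rw [abs_of_nonneg (posPart_nonneg _), abs_of_nonneg
                (add_nonneg (posPart_nonneg _) (posPart_nonneg _)), hAB]
              exact hle1
          _ ≤ ‖(v - s • y)⁺‖ + ‖(w - t • y)⁺‖ := norm_add_le _ _
          _ = ‖(w - t • y)⁺‖ + ‖(v - s • y)⁺‖ := add_comm _ _
      linarith
    linarith
  rcases eq_or_lt_of_le ha with rfl | ha'
  · -- a = 0 : take g = 0
    refine ⟨0, by simp, by simp, by simp⟩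
  -- partial functional on span {a}
  have hane : a ≠ 0 := ha'.ne'
  set f : E →ₗ.[ℝ] ℝ := LinearPMap.mkSpanSingleton a ‖a‖ hane with hf
  have hfdom : f.domain = ℝ ∙ a := rfl
  have hfN : ∀ z : f.domain, f z ≤ N z := by
    rintro ⟨z, hz⟩
    rw [hfdom] at hz
    obtain ⟨c, rfl⟩ := Submodule.mem_span_singleton.mp hz
    have happ : f ⟨c • a, hz⟩ = c • ‖a‖ := LinearPMap.mkSpanSingleton'_apply a ‖a‖ _ c _
    rw [happ, smul_eq_mul]
    rcases le_or_gt c 0 with hc | hc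
    · exact le_trans (mul_nonpos_of_nonpos_of_nonneg hc (norm_nonneg a)) (hN0 _)
    · refine hleN (c • a) _ ?_
      intro t ht
      have hinf : (c • a) ⊓ (t • y) = 0 := aux_smul_inf_zero ha hy hay hc.le ht
      have hpp : (c • a - t • y)⁺ = c • a :=
        aux_posPart_sub (smul_nonneg hc.le ha) (smul_nonneg ht hy) hinf
      rw [hpp, norm_smul, Real.norm_of_nonneg hc.le]
  obtain ⟨g, hg_eq, hg_le⟩ := exists_extension_of_le_sublinear f N N_hom N_add hfN
  -- basic properties of g
  have hg_pos : ∀ v : E, 0 ≤ v → 0 ≤ g v := by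
    intro v hv
    have h1 : g (-v) ≤ N (-v) := hg_le _
    have h2 : N (-v) ≤ ‖((-v) - (0:ℝ) • y)⁺‖ := hNle _ 0 le_rfl
    have h3 : ((-v) - (0:ℝ) • y)⁺ = 0 := by
      rw [zero_smul, sub_zero]
      exact posPart_eq_zero.mpr (neg_nonpos.mpr hv)
    rw [h3, norm_zero] at h2
    rw [map_neg] at h1
    linarith
  have hg_y : ∀ v : E, v ≤ y → g v ≤ 0 := by
    intro v hv
    have h1 : g v ≤ N v := hg_le v
    have h2 : N v ≤ ‖(v - (1:ℝ) • y)⁺‖ := hNle _ 1 zero_le_one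
    have h3 : (v - (1:ℝ) • y)⁺ = 0 := by
      rw [one_smul]
      exact posPart_eq_zero.mpr (sub_nonpos.mpr hv)
    rw [h3, norm_zero] at h2
    linarith
  have hg_a : g a = ‖a‖ := by
    have hmem : a ∈ f.domain := by
      rw [hfdom]; exact Submodule.mem_span_singleton_self a
    have := hg_eq ⟨a, hmem⟩
    rw [LinearPMap.mkSpanSingleton_apply] at this
    exact this
  -- continuity
  have hg_bound : ∀ v : E, ‖g v‖ ≤ 1 * ‖v‖ := by
    intro v
    rw [one_mul, Real.norm_eq_abs, abs_le]
    constructor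
    · have h1 : g (-v) ≤ N (-v) := hg_le _
      have h2 : N (-v) ≤ ‖((-v) - (0:ℝ) • y)⁺‖ := hNle _ 0 le_rfl
      rw [zero_smul, sub_zero] at h2
      have h3 : ‖(-v)⁺‖ ≤ ‖-v‖ := aux_norm_posPart_le _
      rw [norm_neg] at h3
      rw [map_neg] at h1
      linarith
    · have h1 : g v ≤ N v := hg_le v
      have h2 : N v ≤ ‖(v - (0:ℝ) • y)⁺‖ := hNle _ 0 le_rfl
      rw [zero_smul, sub_zero] at h2
      have h3 : ‖v⁺‖ ≤ ‖v‖ := aux_norm_posPart_le _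
      linarith
  exact ⟨g.mkContinuous 1 hg_bound, hg_pos, hg_a, hg_y⟩

end Aux

/-- If `E` is a Banach lattice of dimension at least `n` and `x 1, …, x n` are nonzero
positive pairwise disjoint vectors, then there are positive continuous linear functionals
`φ 1, …, φ n` with `φ i (x j) = δ_{ij}`. -/
theorem exists_biorthogonal_positive_functionals
    {E : Type*} [NormedAddCommGroup E] [Lattice E] [HasSolidNorm E] [IsOrderedAddMonoid E]
    [NormedSpace ℝ E] [PosSMulStrictMono ℝ E]
    [CompleteSpace E] (n : ℕ) (hdim : (n : Cardinal) ≤ Module.rank ℝ E)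
    (x : Fin n → E) (hx : ∀ i, 0 < x i)
    (hdisj : ∀ i j, i ≠ j → |x i| ⊓ |x j| = 0) :
    ∃ φ : Fin n → (E →L[ℝ] ℝ),
      (∀ i, ∀ v : E, 0 ≤ v → 0 ≤ φ i v) ∧
      (∀ i j, φ i (x j) = if i = j then 1 else 0) := by
  classical
  have key : ∀ i : Fin n, ∃ φi : E →L[ℝ] ℝ,
      (∀ v : E, 0 ≤ v → 0 ≤ φi v) ∧ ∀ j, φi (x j) = if i = j then 1 else 0 := by
    intro i
    set y : E := ∑ j ∈ Finset.univ.erase i, x j with hy_def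
    have hy : 0 ≤ y := Finset.sum_nonneg (fun j _ => (hx j).le)
    have hds : ∀ j, i ≠ j → x i ⊓ x j = 0 := by
      intro j hij
      have := hdisj i j hij
      rwa [abs_of_pos (hx i), abs_of_pos (hx j)] at this
    have hay : x i ⊓ y = 0 := by
      have : ∀ s : Finset (Fin n), i ∉ s → x i ⊓ (∑ j ∈ s, x j) = 0 := by
        intro s
        induction s using Finset.induction_on with
        | empty => intro _; simpa using inf_eq_right.mpr (hx i).le
        | @insert j s' hns ih =>
            intro hins
            rw [Finset.sum_insert hns]
            have hij : i ≠ j := fun h => hins (h ▸ Finset.mem_insert_self j s')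
            exact aux_inf_add (hx i).le (hx j).le
              (Finset.sum_nonneg fun k _ => (hx k).le) (hds j hij)
              (ih fun h => hins (Finset.mem_insert_of_mem h))
      exact this _ (Finset.notMem_erase i _)
    obtain ⟨g, hg_pos, hg_a, hg_y⟩ := exists_pos_functional (hx i).le hy hay
    have hnorm_pos : (0:ℝ) < ‖x i‖ := norm_pos_iff.mpr (hx i).ne'
    refine ⟨(‖x i‖)⁻¹ • g, ?_, ?_⟩
    · intro v hv
      simp only [ContinuousLinearMap.smul_apply, smul_eq_mul]
      exact mul_nonneg (inv_nonneg.mpr hnorm_pos.le) (hg_pos v hv)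
    · intro j
      simp only [ContinuousLinearMap.smul_apply, smul_eq_mul]
      rcases eq_or_ne i j with rfl | hij
      · rw [if_pos rfl, hg_a, inv_mul_cancel₀ hnorm_pos.ne']
      · rw [if_neg hij]
        have hle : x j ≤ y := by
          refine Finset.single_le_sum (f := x) (fun k _ => (hx k).le) ?_
          exact Finset.mem_erase.mpr ⟨fun h => hij (h ▸ rfl), Finset.mem_univ j⟩
        have h1 : g (x j) ≤ 0 := hg_y _ hle
        have h2 : 0 ≤ g (x j) := hg_pos _ (hx j).le
        rw [le_antisymm h1 h2, mul_zero]
  choose φ hφ1 hφ2 using key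
  exact ⟨φ, hφ1, hφ2⟩
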